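/- For the half-line quantum walk with symmetric Hadamard-type coin (parameter θ, c = cos θ, s = sin θ) and the stated initial state, all amplitudes are of the form (real) · e^{-iθ} rotated appropriately: specifically, writing the line-walk coefficients γ_t(x), δ_t(x) ∈ ℝ as above, the half-line amplitudes satisfy |α_t(x)|² + |β_t(x)|² = (γ_t(x)² + δ_t(x)²) + (γ_t(-x-1)² + δ_t(-x-1)²) for all t ∈ ℕ and x ∈ ℕ, i.e. P(X_t^{HL} = x) = P(Y_t^L = x) + P(Y_t^L = -x-1). -/

import Mathlib

noncomputable def lineWalk (c s : ℝ) : ℕ → (ℤ → ℝ) × (ℤ → ℝ)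
  | 0 =>
      (fun x => if x = -1 ∨ x = 0 then c / Real.sqrt 2 else 0,
       fun x => if x = -1 ∨ x = 0 then s / Real.sqrt 2 else 0)
  | t + 1 =>
      (fun x => c * (lineWalk c s t).1 (x + 1) + s * (lineWalk c s t).2 (x + 1),
       fun x => s * (lineWalk c s t).1 (x - 1) - c * (lineWalk c s t).2 (x - 1))

noncomputable def halfWalk (θ : ℝ) : ℕ → (ℕ → ℂ) × (ℕ → ℂ)
  | 0 =>
      (fun x => if x = 0 then Complex.exp (-(θ : ℂ) * Complex.I) / (Real.sqrt 2 : ℂ) else 0,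
       fun x => if x = 0 then Complex.I * Complex.exp (-(θ : ℂ) * Complex.I) / (Real.sqrt 2 : ℂ) else 0)
  | t + 1 =>
      (fun x => (Real.cos θ : ℂ) * (halfWalk θ t).1 (x + 1) + (Real.sin θ : ℂ) * (halfWalk θ t).2 (x + 1),
       fun x =>
         if x = 0 then (Real.cos θ : ℂ) * (halfWalk θ t).1 0 + (Real.sin θ : ℂ) * (halfWalk θ t).2 0
         else (Real.sin θ : ℂ) * (halfWalk θ t).1 (x - 1) - (Real.cos θ : ℂ) * (halfWalk θ t).2 (x - 1))

noncomputable def wph (n : ℕ) : ℂ := if n % 2 = 0 then 1 else Complex.I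

lemma wph_succ (n : ℕ) : wph (n + 1) = (-1 : ℂ) ^ n * Complex.I * wph n := by
  rcases Nat.even_or_odd n with h | h
  · have h0 : n % 2 = 0 := Nat.even_iff.mp h
    have h1 : (n + 1) % 2 = 1 := by omega
    simp [wph, h0, h1, Even.neg_one_pow h]
  · have h0 : n % 2 = 1 := Nat.odd_iff.mp h
    have h1 : (n + 1) % 2 = 0 := by omega
    simp [wph, h0, h1, Odd.neg_one_pow h, Complex.I_mul_I]

lemma wph_abs (n : ℕ) : ‖wph n‖ = 1 := by
  unfold wph; split <;> simp

lemma sq_abs_aux (a b : ℝ) (n m : ℕ) :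
    ‖wph n * ((a : ℂ) + (-1 : ℂ) ^ m * Complex.I * (b : ℂ))‖ ^ 2 = a ^ 2 + b ^ 2 := by
  rw [norm_mul, wph_abs, one_mul, Complex.sq_norm, Complex.normSq_apply]
  rcases Nat.even_or_odd m with h | h <;>
    [rw [h.neg_one_pow]; rw [h.neg_one_pow]] <;>
    simp [Complex.add_re, Complex.add_im, Complex.mul_re, Complex.mul_im] <;> ring

lemma key (θ : ℝ) : ∀ t x : ℕ,
    (halfWalk θ t).1 x
      = wph (t + x) * (((lineWalk (Real.cos θ) (Real.sin θ) t).1 (x : ℤ) : ℂ)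
          + (-1 : ℂ) ^ (t + 1) * Complex.I
            * ((lineWalk (Real.cos θ) (Real.sin θ) t).2 (-(x : ℤ) - 1) : ℂ)) ∧
    (halfWalk θ t).2 x
      = wph (t + x) * (((lineWalk (Real.cos θ) (Real.sin θ) t).2 (x : ℤ) : ℂ)
          + (-1 : ℂ) ^ t * Complex.I
            * ((lineWalk (Real.cos θ) (Real.sin θ) t).1 (-(x : ℤ) - 1) : ℂ)) := by
  intro t
  induction t with
  | zero =>
      intro x
      have hexp : Complex.exp (-(θ : ℂ) * Complex.I)
          = (Real.cos θ : ℂ) - (Real.sin θ : ℂ) * Complex.I := by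
        rw [show -(θ : ℂ) * Complex.I = ((-θ : ℝ) : ℂ) * Complex.I by push_cast; ring,
          Complex.exp_mul_I, ← Complex.ofReal_cos, ← Complex.ofReal_sin,
          Real.cos_neg, Real.sin_neg]
        push_cast [-Complex.ofReal_cos, -Complex.ofReal_sin]
        ring
      cases x with
      | zero =>
          have hc1 : ((0 : ℕ) : ℤ) = -1 ∨ ((0 : ℕ) : ℤ) = 0 := by norm_num
          have hc2 : (-((0 : ℕ) : ℤ) - 1) = -1 ∨ (-((0 : ℕ) : ℤ) - 1) = 0 := by norm_num
          constructor
          · simp only [halfWalk, lineWalk, if_pos rfl, if_pos hc1, if_pos hc2, hexp, wph]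
            norm_num
            ring
          · simp only [halfWalk, lineWalk, if_pos rfl, if_pos hc1, if_pos hc2, hexp, wph]
            norm_num
            linear_combination (-(Complex.sin (θ : ℂ)) / (Real.sqrt 2 : ℂ)) * Complex.I_mul_I
      | succ n =>
          have h1 : ¬((((n : ℕ) + 1 : ℕ) : ℤ) = -1 ∨ (((n : ℕ) + 1 : ℕ) : ℤ) = 0) := by
            push_cast; omega
          have h2 : ¬((-(((n : ℕ) + 1 : ℕ) : ℤ) - 1) = -1 ∨ (-(((n : ℕ) + 1 : ℕ) : ℤ) - 1) = 0) := by
            push_cast; omega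
          constructor <;>
          · simp only [halfWalk, lineWalk, if_neg h1, if_neg h2,
              if_neg (Nat.succ_ne_zero n)]
            simp
  | succ t ih =>
      intro x
      constructor
      · -- α component
        have hA := (ih (x + 1)).1
        have hB := (ih (x + 1)).2
        push_cast [-Complex.ofReal_cos, -Complex.ofReal_sin] at hA hB
        have hw : wph (t + 1 + x) = wph (t + (x + 1)) := by ring_nf
        show (Real.cos θ : ℂ) * (halfWalk θ t).1 (x + 1)
            + (Real.sin θ : ℂ) * (halfWalk θ t).2 (x + 1) = _
        rw [hA, hB, hw]
        have e1 : (lineWalk (Real.cos θ) (Real.sin θ) (t + 1)).1 (x : ℤ)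
            = Real.cos θ * (lineWalk (Real.cos θ) (Real.sin θ) t).1 ((x : ℤ) + 1)
              + Real.sin θ * (lineWalk (Real.cos θ) (Real.sin θ) t).2 ((x : ℤ) + 1) := rfl
        have harg : -(x : ℤ) - 1 - 1 = -((x : ℤ) + 1) - 1 := by ring
        have e2 : (lineWalk (Real.cos θ) (Real.sin θ) (t + 1)).2 (-(x : ℤ) - 1)
            = Real.sin θ * (lineWalk (Real.cos θ) (Real.sin θ) t).1 (-((x : ℤ) + 1) - 1)
              - Real.cos θ * (lineWalk (Real.cos θ) (Real.sin θ) t).2 (-((x : ℤ) + 1) - 1) := by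
          calc (lineWalk (Real.cos θ) (Real.sin θ) (t + 1)).2 (-(x : ℤ) - 1)
              = Real.sin θ * (lineWalk (Real.cos θ) (Real.sin θ) t).1 (-(x : ℤ) - 1 - 1)
                - Real.cos θ * (lineWalk (Real.cos θ) (Real.sin θ) t).2 (-(x : ℤ) - 1 - 1) := rfl
            _ = _ := by rw [harg]
        rw [e1, e2]
        push_cast [-Complex.ofReal_cos, -Complex.ofReal_sin]
        ring
      · -- β component
        cases x with
        | zero =>
            have hA := (ih 0).1
            have hB := (ih 0).2
            push_cast [-Complex.ofReal_cos, -Complex.ofReal_sin] at hA hB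
            show (Real.cos θ : ℂ) * (halfWalk θ t).1 0 + (Real.sin θ : ℂ) * (halfWalk θ t).2 0 = _
            rw [hA, hB]
            have e1 : (lineWalk (Real.cos θ) (Real.sin θ) (t + 1)).2 (((0 : ℕ)) : ℤ)
                = Real.sin θ * (lineWalk (Real.cos θ) (Real.sin θ) t).1 (-1)
                  - Real.cos θ * (lineWalk (Real.cos θ) (Real.sin θ) t).2 (-1) := by
              calc (lineWalk (Real.cos θ) (Real.sin θ) (t + 1)).2 (((0 : ℕ)) : ℤ)
                  = Real.sin θ * (lineWalk (Real.cos θ) (Real.sin θ) t).1 ((((0:ℕ)):ℤ) - 1)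
                    - Real.cos θ * (lineWalk (Real.cos θ) (Real.sin θ) t).2 ((((0:ℕ)):ℤ) - 1) := rfl
                _ = _ := by norm_num
            have e2 : (lineWalk (Real.cos θ) (Real.sin θ) (t + 1)).1 (-(((0 : ℕ)) : ℤ) - 1)
                = Real.cos θ * (lineWalk (Real.cos θ) (Real.sin θ) t).1 0
                  + Real.sin θ * (lineWalk (Real.cos θ) (Real.sin θ) t).2 0 := by
              calc (lineWalk (Real.cos θ) (Real.sin θ) (t + 1)).1 (-(((0 : ℕ)) : ℤ) - 1)
                  = Real.cos θ * (lineWalk (Real.cos θ) (Real.sin θ) t).1 (-(((0:ℕ)):ℤ) - 1 + 1)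
                    + Real.sin θ * (lineWalk (Real.cos θ) (Real.sin θ) t).2 (-(((0:ℕ)):ℤ) - 1 + 1) := rfl
                _ = _ := by norm_num
            rw [e1, e2]
            have hw : wph (t + 1 + 0) = (-1 : ℂ) ^ t * Complex.I * wph t := by
              rw [show t + 1 + 0 = t + 1 from rfl, wph_succ]
            rw [hw, show t + 0 = t from rfl] at *
            have hpow : (-1 : ℂ) ^ t * (-1 : ℂ) ^ t = 1 := by
              rw [← pow_add, ← two_mul, pow_mul]; norm_num
            push_cast [-Complex.ofReal_cos, -Complex.ofReal_sin]
            linear_combination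
              ((wph t) * ((Real.cos θ : ℂ) * ((lineWalk (Real.cos θ) (Real.sin θ) t).1 0 : ℂ)
                  + (Real.sin θ : ℂ) * ((lineWalk (Real.cos θ) (Real.sin θ) t).2 0 : ℂ)))
                * Complex.I_mul_I
              + ((wph t) * Complex.I * Complex.I
                  * ((Real.cos θ : ℂ) * ((lineWalk (Real.cos θ) (Real.sin θ) t).1 0 : ℂ)
                    + (Real.sin θ : ℂ) * ((lineWalk (Real.cos θ) (Real.sin θ) t).2 0 : ℂ))) * hpow
        | succ n =>
            have hA := (ih n).1
            have hB := (ih n).2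
            push_cast [-Complex.ofReal_cos, -Complex.ofReal_sin] at hA hB
            show (if (n + 1 : ℕ) = 0 then
                (Real.cos θ : ℂ) * (halfWalk θ t).1 0 + (Real.sin θ : ℂ) * (halfWalk θ t).2 0
              else (Real.sin θ : ℂ) * (halfWalk θ t).1 ((n + 1) - 1)
                - (Real.cos θ : ℂ) * (halfWalk θ t).2 ((n + 1) - 1)) = _
            rw [if_neg (Nat.succ_ne_zero n), show (n + 1 : ℕ) - 1 = n from rfl, hA, hB]
            have harg1 : (((n + 1 : ℕ)) : ℤ) - 1 = (n : ℤ) := by push_cast; ring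
            have harg2 : -(((n + 1 : ℕ)) : ℤ) - 1 + 1 = -(n : ℤ) - 1 := by push_cast; ring
            have e1 : (lineWalk (Real.cos θ) (Real.sin θ) (t + 1)).2 (((n + 1 : ℕ)) : ℤ)
                = Real.sin θ * (lineWalk (Real.cos θ) (Real.sin θ) t).1 ((n : ℤ))
                  - Real.cos θ * (lineWalk (Real.cos θ) (Real.sin θ) t).2 ((n : ℤ)) := by
              calc (lineWalk (Real.cos θ) (Real.sin θ) (t + 1)).2 (((n + 1 : ℕ)) : ℤ)
                  = Real.sin θ * (lineWalk (Real.cos θ) (Real.sin θ) t).1 ((((n+1:ℕ)):ℤ) - 1)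
                    - Real.cos θ * (lineWalk (Real.cos θ) (Real.sin θ) t).2 ((((n+1:ℕ)):ℤ) - 1) := rfl
                _ = _ := by rw [harg1]
            have e2 : (lineWalk (Real.cos θ) (Real.sin θ) (t + 1)).1 (-(((n + 1 : ℕ)) : ℤ) - 1)
                = Real.cos θ * (lineWalk (Real.cos θ) (Real.sin θ) t).1 (-(n : ℤ) - 1)
                  + Real.sin θ * (lineWalk (Real.cos θ) (Real.sin θ) t).2 (-(n : ℤ) - 1) := by
              calc (lineWalk (Real.cos θ) (Real.sin θ) (t + 1)).1 (-(((n + 1 : ℕ)) : ℤ) - 1)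
                  = Real.cos θ * (lineWalk (Real.cos θ) (Real.sin θ) t).1 (-(((n+1:ℕ)):ℤ) - 1 + 1)
                    + Real.sin θ * (lineWalk (Real.cos θ) (Real.sin θ) t).2 (-(((n+1:ℕ)):ℤ) - 1 + 1) := rfl
                _ = _ := by rw [harg2]
            rw [e1, e2]
            have hw : wph (t + 1 + (n + 1)) = wph (t + n) := by
              have h : t + 1 + (n + 1) = (t + n) + 2 := by ring
              rw [h]; unfold wph; rw [Nat.add_mod_right]
            rw [hw]
            push_cast [-Complex.ofReal_cos, -Complex.ofReal_sin]
            ring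

theorem half_line_total_probability_copy (θ : ℝ) (h0 : θ ≠ 0) (hπ : θ ≠ Real.pi) :
    ∀ (t x : ℕ),
      ‖(halfWalk θ t).1 x‖ ^ 2 + ‖(halfWalk θ t).2 x‖ ^ 2
        = ((lineWalk (Real.cos θ) (Real.sin θ) t).1 (x : ℤ) ^ 2
            + (lineWalk (Real.cos θ) (Real.sin θ) t).2 (x : ℤ) ^ 2)
          + ((lineWalk (Real.cos θ) (Real.sin θ) t).1 (-(x : ℤ) - 1) ^ 2
            + (lineWalk (Real.cos θ) (Real.sin θ) t).2 (-(x : ℤ) - 1) ^ 2) := by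
  intro t x
  obtain ⟨hA, hB⟩ := key θ t x
  rw [hA, hB, sq_abs_aux, sq_abs_aux]
  ring
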